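/- For every integer k ≥ 2 and every real λ > 0, neither 1 nor k+1 is a mode of the Poisson distribution of order k with parameter λ. -/

import Mathlib

/-- Scaled pmf of the Poisson distribution of order `k`:
`h_k(n;λ) = Σ λ^(n₁+⋯+n_k)/(n₁!⋯n_k!)`, summed over all `k`-tuples `(n₁,…,n_k)`
of nonnegative integers with `n₁ + 2n₂ + ⋯ + k·n_k = n`.
(Each `n_i` is at most `n` whenever the constraint holds, so the range is exhaustive.) -/
noncomputable def poissonOrderH (k n : ℕ) (lam : ℝ) : ℝ :=
  ∑ t ∈ (Fintype.piFinset fun _ : Fin k => Finset.range (n + 1)) |>.filter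
      (fun t => ∑ i : Fin k, ((i : ℕ) + 1) * t i = n),
    lam ^ (∑ i : Fin k, t i) / ∏ i : Fin k, (Nat.factorial (t i) : ℝ)

/-- Pmf of the Poisson distribution of order `k`: `f_k(n;λ) = e^{-kλ} h_k(n;λ)`. -/
noncomputable def poissonOrderPmf (k n : ℕ) (lam : ℝ) : ℝ :=
  Real.exp (-(k * lam)) * poissonOrderH k n lam

/-- `m` is a mode of the Poisson distribution of order `k` with parameter `lam`. -/
def IsMode (k : ℕ) (lam : ℝ) (m : ℕ) : Prop :=
  ∀ n : ℕ, poissonOrderPmf k n lam ≤ poissonOrderPmf k m lam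

private def Sset (k n : ℕ) : Finset (Fin k → ℕ) :=
  (Fintype.piFinset fun _ : Fin k => Finset.range (n + 1)).filter
      (fun t => ∑ i : Fin k, ((i : ℕ) + 1) * t i = n)

private noncomputable def wt (k : ℕ) (lam : ℝ) (t : Fin k → ℕ) : ℝ :=
  lam ^ (∑ i : Fin k, t i) / ∏ i : Fin k, (Nat.factorial (t i) : ℝ)

private lemma H_eq (k n : ℕ) (lam : ℝ) :
    poissonOrderH k n lam = ∑ t ∈ Sset k n, wt k lam t := rfl

private lemma mem_Sset {k n : ℕ} {t : Fin k → ℕ} :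
    t ∈ Sset k n ↔ ∑ i : Fin k, ((i : ℕ) + 1) * t i = n := by
  constructor
  · exact fun h => (Finset.mem_filter.1 h).2
  · intro h
    refine Finset.mem_filter.2 ⟨Fintype.mem_piFinset.2 fun i => Finset.mem_range.2 ?_, h⟩
    have h1 : ((i : ℕ) + 1) * t i ≤ n := by
      rw [← h]
      exact Finset.single_le_sum (f := fun i : Fin k => ((i : ℕ) + 1) * t i)
        (fun _ _ => Nat.zero_le _) (Finset.mem_univ i)
    have h2 : t i ≤ ((i : ℕ) + 1) * t i := Nat.le_mul_of_pos_left _ (Nat.succ_pos _)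
    omega

private lemma wt_pos {k : ℕ} {lam : ℝ} (hlam : 0 < lam) (t : Fin k → ℕ) :
    0 < wt k lam t := by
  apply div_pos (pow_pos hlam _)
  exact Finset.prod_pos fun i _ => by positivity

private lemma H_nonneg {k n : ℕ} {lam : ℝ} (hlam : 0 < lam) :
    0 ≤ poissonOrderH k n lam := by
  rw [H_eq]
  exact Finset.sum_nonneg fun t _ => (wt_pos hlam t).le

private lemma H_zero (k : ℕ) (lam : ℝ) : poissonOrderH k 0 lam = 1 := by
  rw [H_eq]
  have hS : Sset k 0 = {fun _ => 0} := by
    ext t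
    rw [mem_Sset, Finset.mem_singleton]
    constructor
    · intro h
      funext i
      have := Finset.sum_eq_zero_iff.1 h i (Finset.mem_univ i)
      exact (Nat.mul_eq_zero.1 this).resolve_left (Nat.succ_ne_zero _)
    · intro h; subst h; simp
  rw [hS, Finset.sum_singleton, wt]
  simp

private lemma sum_update_aux {M : Type*} [AddCommMonoid M] {k : ℕ} (F : Fin k → ℕ → M)
    (t : Fin k → ℕ) (i : Fin k) (v : ℕ) :
    ∑ j, F j (Function.update t i v j) = F i v + ∑ j ∈ Finset.univ.erase i, F j (t j) := by
  have h : (fun j => F j (Function.update t i v j))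
      = Function.update (fun j => F j (t j)) i (F i v) := by
    funext j
    by_cases hj : j = i
    · subst hj; simp
    · simp [Function.update_of_ne hj]
  rw [h, Finset.sum_update_of_mem (Finset.mem_univ i), Finset.erase_eq]

private lemma sum_plain_aux {M : Type*} [AddCommMonoid M] {k : ℕ} (F : Fin k → ℕ → M)
    (t : Fin k → ℕ) (i : Fin k) :
    ∑ j, F j (t j) = F i (t i) + ∑ j ∈ Finset.univ.erase i, F j (t j) :=
  (Finset.add_sum_erase _ _ (Finset.mem_univ i)).symm

private lemma prod_update_aux {M : Type*} [CommMonoid M] {k : ℕ} (F : Fin k → ℕ → M)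
    (t : Fin k → ℕ) (i : Fin k) (v : ℕ) :
    ∏ j, F j (Function.update t i v j) = F i v * ∏ j ∈ Finset.univ.erase i, F j (t j) := by
  have h : (fun j => F j (Function.update t i v j))
      = Function.update (fun j => F j (t j)) i (F i v) := by
    funext j
    by_cases hj : j = i
    · subst hj; simp
    · simp [Function.update_of_ne hj]
  rw [h, Finset.prod_update_of_mem (Finset.mem_univ i), Finset.erase_eq]

private lemma prod_plain_aux {M : Type*} [CommMonoid M] {k : ℕ} (F : Fin k → ℕ → M)
    (t : Fin k → ℕ) (i : Fin k) :
    ∏ j, F j (t j) = F i (t i) * ∏ j ∈ Finset.univ.erase i, F j (t j) :=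
  (Finset.mul_prod_erase _ _ (Finset.mem_univ i)).symm

private lemma key {k : ℕ} {lam : ℝ} (i : Fin k) (n : ℕ) (h : (i : ℕ) + 1 ≤ n) :
    ∑ t ∈ Sset k n, (t i : ℝ) * wt k lam t
      = lam * poissonOrderH k (n - ((i : ℕ) + 1)) lam := by
  set m := n - ((i : ℕ) + 1) with hm
  have hmn : m + ((i : ℕ) + 1) = n := Nat.sub_add_cancel h
  rw [H_eq, Finset.mul_sum]
  rw [← Finset.sum_filter_of_ne (p := fun t => t i ≠ 0)
      (fun t _ hf h0 => hf (by rw [h0]; simp))]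
  apply Finset.sum_nbij' (fun t => Function.update t i (t i - 1))
      (fun s => Function.update s i (s i + 1))
  · intro t ht
    obtain ⟨htS, hti⟩ := Finset.mem_filter.1 ht
    obtain ⟨c, hc⟩ : ∃ c, t i = c + 1 := ⟨t i - 1, by omega⟩
    rw [mem_Sset]
    have e1 := sum_update_aux (fun j x => ((j : ℕ) + 1) * x) t i (t i - 1)
    have e2 := sum_plain_aux (fun j x => ((j : ℕ) + 1) * x) t i
    rw [mem_Sset.1 htS] at e2
    simp only [hc] at e1 e2 ⊢
    simp only [Nat.add_sub_cancel] at e1 ⊢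
    rw [e1]
    have : ((i : ℕ) + 1) * (c + 1) = ((i : ℕ) + 1) * c + ((i : ℕ) + 1) := by ring
    omega
  · intro s hs
    rw [mem_Sset] at hs
    refine Finset.mem_filter.2 ⟨mem_Sset.2 ?_, by simp⟩
    have e1 := sum_update_aux (fun j x => ((j : ℕ) + 1) * x) s i (s i + 1)
    have e2 := sum_plain_aux (fun j x => ((j : ℕ) + 1) * x) s i
    rw [hs] at e2
    rw [e1]
    have : ((i : ℕ) + 1) * (s i + 1) = ((i : ℕ) + 1) * s i + ((i : ℕ) + 1) := by ring
    omega
  · intro t ht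
    obtain ⟨htS, hti⟩ := Finset.mem_filter.1 ht
    funext j
    by_cases hj : j = i
    · subst hj; simp; omega
    · simp [Function.update_of_ne hj]
  · intro s hs
    funext j
    by_cases hj : j = i
    · subst hj; simp
    · simp [Function.update_of_ne hj]
  · intro t ht
    obtain ⟨htS, hti⟩ := Finset.mem_filter.1 ht
    obtain ⟨c, hc⟩ : ∃ c, t i = c + 1 := ⟨t i - 1, by omega⟩
    unfold wt
    have eS1 := sum_update_aux (fun _ x => x) t i (t i - 1)
    have eS2 := sum_plain_aux (fun _ x => x) t i
    have eP1 := prod_update_aux (fun _ x => (Nat.factorial x : ℝ)) t i (t i - 1)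
    have eP2 := prod_plain_aux (fun _ x => (Nat.factorial x : ℝ)) t i
    rw [eS1, eS2, eP1, eP2]
    simp only [hc, Nat.add_sub_cancel]
    set St := ∑ j ∈ Finset.univ.erase i, t j
    set Pt := ∏ j ∈ Finset.univ.erase i, (Nat.factorial (t j) : ℝ)
    have hPt : 0 < Pt := Finset.prod_pos fun j _ => by positivity
    have hfac : (Nat.factorial (c + 1) : ℝ) = (c + 1) * Nat.factorial c := by
      rw [Nat.factorial_succ]; push_cast; ring
    rw [hfac]
    have hpow : lam ^ (c + 1 + St) = lam * lam ^ (c + St) := by ring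
    rw [hpow]
    have hfc : (0:ℝ) < Nat.factorial c := by positivity
    push_cast
    field_simp

private lemma key0 {k : ℕ} {lam : ℝ} (i : Fin k) (n : ℕ) (h : n < (i : ℕ) + 1) :
    ∑ t ∈ Sset k n, (t i : ℝ) * wt k lam t = 0 := by
  apply Finset.sum_eq_zero
  intro t ht
  have h1 : ((i : ℕ) + 1) * t i ≤ n := by
    rw [← mem_Sset.1 ht]
    exact Finset.single_le_sum (f := fun i : Fin k => ((i : ℕ) + 1) * t i)
      (fun _ _ => Nat.zero_le _) (Finset.mem_univ i)
  have : t i = 0 := by nlinarith [Nat.le_mul_of_pos_left (t i) (Nat.succ_pos (i : ℕ))]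
  rw [this]
  simp

/-- the master recurrence, `if` form -/
private lemma recc_if (k : ℕ) (lam : ℝ) (n : ℕ) :
    (n : ℝ) * poissonOrderH k n lam
      = lam * ∑ i : Fin k, (if (i : ℕ) + 1 ≤ n then
          ((i : ℕ) + 1 : ℝ) * poissonOrderH k (n - ((i : ℕ) + 1)) lam else 0) := by
  rw [H_eq, Finset.mul_sum, Finset.mul_sum]
  have lhs_eq : ∑ t ∈ Sset k n, (n : ℝ) * wt k lam t
      = ∑ i : Fin k, ∑ t ∈ Sset k n, ((i : ℕ) + 1 : ℝ) * ((t i : ℝ) * wt k lam t) := by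
    rw [Finset.sum_comm]
    apply Finset.sum_congr rfl
    intro t ht
    have e : (∑ x : Fin k, (((x : ℕ) : ℝ) + 1) * ((t x : ℝ) * wt k lam t))
        = (↑(∑ x : Fin k, ((x : ℕ) + 1) * t x)) * wt k lam t := by
      push_cast
      rw [Finset.sum_mul]
      exact Finset.sum_congr rfl fun x _ => by ring
    rw [e, mem_Sset.1 ht]
  rw [lhs_eq]
  apply Finset.sum_congr rfl
  intro i _
  by_cases hin : (i : ℕ) + 1 ≤ n
  · rw [if_pos hin, ← Finset.mul_sum, key i n hin]
    ring
  · rw [if_neg hin, ← Finset.mul_sum, key0 i n (by omega)]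
    ring

private lemma reclow (k : ℕ) (lam : ℝ) (m : ℕ) (hm1 : 1 ≤ m) (hmk : m ≤ k) :
    (m : ℝ) * poissonOrderH k m lam
      = lam * ((∑ i ∈ Finset.range (m - 1),
          ((i : ℝ) + 1) * poissonOrderH k (m - 1 - i) lam) + m) := by
  rw [recc_if k lam m]
  congr 1
  rw [Fin.sum_univ_eq_sum_range (fun i =>
    if i + 1 ≤ m then ((i : ℝ) + 1) * poissonOrderH k (m - (i + 1)) lam else 0)]
  rw [← Finset.sum_subset (Finset.range_subset_range.2 hmk)
    (fun i _ hi => by rw [if_neg (by simp at hi ⊢; omega)])]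
  have hm : m = (m - 1) + 1 := by omega
  rw [hm, Finset.sum_range_succ]
  rw [if_pos (by omega)]
  have e1 : m - 1 + 1 - (m - 1 + 1) = 0 := by omega
  rw [e1, H_zero]
  have e2 : ((m - 1 : ℕ) : ℝ) + 1 = ((m - 1 + 1 : ℕ) : ℝ) := by push_cast; ring
  rw [e2, mul_one]
  congr 1
  apply Finset.sum_congr rfl
  intro i hi
  simp only [Finset.mem_range] at hi
  rw [if_pos (by omega)]
  congr 2
  omega

private lemma recc_ge (k : ℕ) (lam : ℝ) (n : ℕ) (hn : k ≤ n) :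
    (n : ℝ) * poissonOrderH k n lam
      = lam * ∑ i ∈ Finset.range k, ((k : ℝ) - i) * poissonOrderH k (n - k + i) lam := by
  rw [recc_if k lam n]
  congr 1
  rw [Fin.sum_univ_eq_sum_range (fun i =>
    if i + 1 ≤ n then ((i : ℝ) + 1) * poissonOrderH k (n - (i + 1)) lam else 0)]
  rw [← Finset.sum_range_reflect (fun i => ((k : ℝ) - i) * poissonOrderH k (n - k + i) lam) k]
  apply Finset.sum_congr rfl
  intro i hi
  simp only [Finset.mem_range] at hi
  rw [if_pos (by omega)]
  have e1 : ((k : ℝ) - ((k - 1 - i : ℕ) : ℝ)) = (i : ℝ) + 1 := by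
    have : ((k - 1 - i : ℕ) : ℝ) = (k : ℝ) - 1 - i := by
      push_cast [Nat.cast_sub (by omega : i ≤ k - 1), Nat.cast_sub (by omega : 1 ≤ k)]
      ring
    rw [this]; ring
  rw [e1]
  congr 2
  omega

private lemma L1 (k : ℕ) (lam : ℝ) (hlam : 0 < lam) (m : ℕ) (hm1 : 1 ≤ m) (hmk : m ≤ k) :
    lam ≤ poissonOrderH k m lam := by
  have h := reclow k lam m hm1 hmk
  have hs : 0 ≤ ∑ i ∈ Finset.range (m - 1),
      ((i : ℝ) + 1) * poissonOrderH k (m - 1 - i) lam :=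
    Finset.sum_nonneg fun i _ => mul_nonneg (by positivity) (H_nonneg hlam)
  have hm0 : (0 : ℝ) < m := by exact_mod_cast hm1
  nlinarith [H_nonneg (k := k) (n := m) hlam]

private lemma gauss (n : ℕ) : ∑ i ∈ Finset.range n, ((i : ℝ) + 1) = n * (n + 1) / 2 := by
  induction n with
  | zero => simp
  | succ n ih => rw [Finset.sum_range_succ, ih]; push_cast; ring

private lemma L2 (k : ℕ) (hk : 2 ≤ k) (lam : ℝ) (hlam : 0 < lam) :
    lam + lam ^ 2 * ((k : ℝ) - 1) / 2 ≤ poissonOrderH k k lam := by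
  have h := reclow k lam k (by omega) le_rfl
  have hs : lam * ((k : ℝ) - 1) * k / 2 ≤ ∑ i ∈ Finset.range (k - 1),
      ((i : ℝ) + 1) * poissonOrderH k (k - 1 - i) lam := by
    have : ∀ i ∈ Finset.range (k - 1),
        ((i : ℝ) + 1) * lam ≤ ((i : ℝ) + 1) * poissonOrderH k (k - 1 - i) lam := by
      intro i hi
      simp only [Finset.mem_range] at hi
      exact mul_le_mul_of_nonneg_left (L1 k lam hlam (k - 1 - i) (by omega) (by omega))
        (by positivity)
    calc lam * ((k : ℝ) - 1) * k / 2
        = (∑ i ∈ Finset.range (k - 1), ((i : ℝ) + 1)) * lam := by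
          rw [gauss]
          have : ((k - 1 : ℕ) : ℝ) = (k : ℝ) - 1 := by
            push_cast [Nat.cast_sub (by omega : 1 ≤ k)]; ring
          rw [this]; ring
      _ = ∑ i ∈ Finset.range (k - 1), ((i : ℝ) + 1) * lam := by rw [Finset.sum_mul]
      _ ≤ _ := Finset.sum_le_sum this
  have hk0 : (0 : ℝ) < k := by positivity
  nlinarith

private lemma H_one (k : ℕ) (hk : 1 ≤ k) (lam : ℝ) : poissonOrderH k 1 lam = lam := by
  have h := reclow k lam 1 le_rfl hk
  simpa using h

private lemma H_two (k : ℕ) (hk : 2 ≤ k) (lam : ℝ) :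
    poissonOrderH k 2 lam = lam + lam ^ 2 / 2 := by
  have h := reclow k lam 2 (by omega) hk
  simp only [show (2:ℕ) - 1 = 1 from rfl, Finset.sum_range_one] at h
  rw [H_one k (by omega) lam] at h
  push_cast at h
  nlinarith [h]

theorem stmt_16 (k : ℕ) (hk : 2 ≤ k) (lam : ℝ) (hlam : 0 < lam) :
    ¬ IsMode k lam 1 ∧ ¬ IsMode k lam (k + 1) := by
  have hexp : 0 < Real.exp (-(k * lam)) := Real.exp_pos _
  have hcmp : ∀ m, IsMode k lam m → ∀ n, poissonOrderH k n lam ≤ poissonOrderH k m lam := by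
    intro m hm n
    have := hm n
    rw [poissonOrderPmf, poissonOrderPmf] at this
    exact le_of_mul_le_mul_left this hexp
  constructor
  · intro hmode
    have h := hcmp 1 hmode 2
    rw [H_two k hk, H_one k (by omega)] at h
    nlinarith
  · intro hmode
    set H : ℕ → ℝ := fun n => poissonOrderH k n lam with hHdef
    have hk1 : H k ≤ H (k + 1) := hcmp _ hmode k
    have hk2m : H (k + 2) ≤ H (k + 1) := hcmp _ hmode (k + 2)
    -- recurrence equations
    have eqA := recc_ge k lam (k + 1) (by omega)
    have eqB := recc_ge k lam (k + 2) (by omega)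
    have eqC := recc_ge k lam k le_rfl
    have ha : ∀ i : ℕ, k + 1 - k + i = i + 1 := fun i => by omega
    have hb : ∀ i : ℕ, k + 2 - k + i = i + 2 := fun i => by omega
    have hc : ∀ i : ℕ, k - k + i = i := fun i => by omega
    simp only [ha] at eqA
    simp only [hb] at eqB
    simp only [hc] at eqC
    set A := ∑ i ∈ Finset.range k, ((k : ℝ) - i) * H (i + 1) with hA
    set B := ∑ i ∈ Finset.range k, ((k : ℝ) - i) * H (i + 2) with hB
    set C := ∑ i ∈ Finset.range k, ((k : ℝ) - i) * H i with hC
    set G := ∑ i ∈ Finset.range k, H (i + 1) with hG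
    set M := H (k + 1) with hM
    push_cast at eqA eqB eqC
    -- relation B = A + G + M - (k+1) lam
    have relB : B = A + G + M - ((k : ℝ) + 1) * lam := by
      have hT1 : ∑ j ∈ Finset.range (k + 1), ((k : ℝ) + 1 - j) * H (j + 1)
          = B + ((k : ℝ) + 1) * H 1 := by
        rw [Finset.sum_range_succ']
        congr 1
        · rw [hB]
          apply Finset.sum_congr rfl
          intro i _
          push_cast
          ring_nf
        · norm_num
      have hT2 : ∑ j ∈ Finset.range (k + 1), ((k : ℝ) + 1 - j) * H (j + 1)
          = (A + G) + M := by
        rw [Finset.sum_range_succ]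
        have e0 : ((k : ℝ) + 1 - k) * H (k + 1) = M := by rw [hM]; ring_nf
        rw [e0]
        congr 1
        rw [hA, hG, ← Finset.sum_add_distrib]
        apply Finset.sum_congr rfl
        intro i _
        ring
      have hH1 : H 1 = lam := H_one k (by omega) lam
      rw [hH1] at hT1
      linarith
    -- relation C = A - G + k
    have relC : C = A - G + (k : ℝ) := by
      have hT1 : ∑ j ∈ Finset.range (k + 1), ((k : ℝ) + 1 - j) * H j
          = A + ((k : ℝ) + 1) * H 0 := by
        rw [Finset.sum_range_succ']
        congr 1
        · rw [hA]
          apply Finset.sum_congr rfl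
          intro i _
          push_cast
          ring_nf
        · norm_num
      have hT2 : ∑ j ∈ Finset.range (k + 1), ((k : ℝ) + 1 - j) * H j
          = (C + (∑ j ∈ Finset.range k, H j)) + H k := by
        rw [Finset.sum_range_succ]
        have e0 : ((k : ℝ) + 1 - k) * H k = H k := by ring_nf
        rw [e0]
        congr 1
        rw [hC, ← Finset.sum_add_distrib]
        apply Finset.sum_congr rfl
        intro i _
        ring
      have hsum : ∑ j ∈ Finset.range k, H j = (∑ j ∈ Finset.range k, H (j + 1)) + H 0 - H k := by
        have e1 := Finset.sum_range_succ' H k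
        have e2 := Finset.sum_range_succ H k
        linarith
      have hH0 : H 0 = 1 := H_zero k lam
      rw [hsum, hH0] at hT2
      rw [hH0] at hT1
      rw [← hG] at hT2
      linarith
    have e1 : ((k : ℝ) + 2) * H (k + 2)
        = ((k : ℝ) + 1) * M + lam * G + lam * M - ((k : ℝ) + 1) * lam ^ 2 := by
      linear_combination eqB + lam * relB - eqA
    have e2 : (k : ℝ) * H k = ((k : ℝ) + 1) * M + (k : ℝ) * lam - lam * G := by
      linear_combination eqC + lam * relC - eqA
    have hkR : (2 : ℝ) ≤ (k : ℝ) := by exact_mod_cast hk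
    have hL2 : lam + lam ^ 2 * ((k : ℝ) - 1) / 2 ≤ H k := L2 k hk lam hlam
    by_cases hk2 : k = 2
    · -- k = 2 case
      subst hk2
      have hH1 : H 1 = lam := H_one 2 (by omega) lam
      have hH2 : H 2 = lam + lam ^ 2 / 2 := H_two 2 (by omega) lam
      have hGval : G = 2 * lam + lam ^ 2 / 2 := by
        rw [hG, Finset.sum_range_succ, Finset.sum_range_one, hH1, hH2]
        ring
      have hMval : M = lam ^ 2 + lam ^ 3 / 6 := by
        have e2' := e2
        norm_num at e2'
        linear_combination (-1/3 : ℝ) * e2' + (2/3 : ℝ) * hH2 + (lam/3) * hGval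
      have hK2val : H 4 = lam ^ 2 / 2 + lam ^ 3 / 2 + lam ^ 4 / 24 := by
        have e1' := e1
        norm_num at e1'
        linear_combination (1/4 : ℝ) * e1' + ((3 + lam)/4) * hMval + (lam/4) * hGval
      norm_num at hk2m
      rw [hH2] at hk1
      rw [hK2val] at hk2m
      rw [hMval] at hk1 hk2m
      nlinarith [sq_nonneg (5 * lam - 6), mul_pos hlam hlam, hk1, hk2m]
    · -- k ≥ 3 case
      have hk3 : (3 : ℝ) ≤ (k : ℝ) := by
        have : 3 ≤ k := by omega
        exact_mod_cast this
      have t1 : (k : ℝ) * H k ≤ (k : ℝ) * M :=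
        mul_le_mul_of_nonneg_left hk1 (by positivity)
      have hG1 : M + (k : ℝ) * lam ≤ lam * G := by linarith [e2, t1]
      have t2 : ((k : ℝ) + 2) * H (k + 2) ≤ ((k : ℝ) + 2) * M :=
        mul_le_mul_of_nonneg_left hk2m (by positivity)
      have hMle : lam * M ≤ lam * (((k : ℝ) + 1) * lam - (k : ℝ)) := by
        nlinarith [e1, t2, hG1]
      have hM2 : M ≤ ((k : ℝ) + 1) * lam - (k : ℝ) := le_of_mul_le_mul_left hMle hlam
      have hfin : lam + lam ^ 2 * ((k : ℝ) - 1) / 2 ≤ ((k : ℝ) + 1) * lam - (k : ℝ) := by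
        linarith
      have hq : ((k : ℝ) - 1) * (lam + lam ^ 2 * ((k : ℝ) - 1) / 2)
          ≤ ((k : ℝ) - 1) * (((k : ℝ) + 1) * lam - (k : ℝ)) :=
        mul_le_mul_of_nonneg_left hfin (by linarith)
      have hx2 : (k : ℝ) * 3 ≤ (k : ℝ) * (k : ℝ) :=
        mul_le_mul_of_nonneg_left hk3 (by positivity)
      linarith [sq_nonneg (((k : ℝ) - 1) * lam - (k : ℝ)), hq, hx2, hk3]
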